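/- arXiv:2209.06268 — 2 statements merged into one kernel-verified Lean document; each statement's English description precedes it below -/
import Mathlib

section
/- Let n ≥ 2 and let k, l, r, s be integers with k > l ≥ 0, r > s ≥ 0, k ≥ r, l ≥ s, and k ≤ n. Then for every λ ∈ ℝⁿ in the Gårding cone Γ_k, the generalized Maclaurin inequality holds: ((S_k(λ)/C_n^k) / (S_l(λ)/C_n^l))^{1/(k−l)} ≤ ((S_r(λ)/C_n^r) / (S_s(λ)/C_n^s))^{1/(r−s)}. -/
open scoped BigOperators

noncomputable section

/-- The k-th elementary symmetric polynomial of `λ ∈ ℝⁿ`; by definition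
`Svec n m λ = 0` for `m > n` and `Svec n 0 λ = 1`. -/
def Svec (n k : ℕ) (lam : Fin n → ℝ) : ℝ :=
  ∑ s ∈ Finset.powersetCard k (Finset.univ : Finset (Fin n)), ∏ i ∈ s, lam i

/-- Integer-indexed version, with the convention `S_m = 0` for `m < 0`. -/
def SvecZ (n : ℕ) (k : ℤ) (lam : Fin n → ℝ) : ℝ :=
  if 0 ≤ k then Svec n k.toNat lam else 0

/-- The Gårding cone `Γ_k = {λ : S_1(λ) > 0, …, S_k(λ) > 0}`. -/
def GardingCone (n k : ℕ) : Set (Fin n → ℝ) :=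
  {lam | ∀ i : ℕ, 1 ≤ i → i ≤ k → 0 < Svec n i lam}

open Finset Polynomial

lemma svec_zero (n : ℕ) (f : Fin n → ℝ) : Svec n 0 f = 1 := by
  simp [Svec]

lemma svec_eq_esymm (n k : ℕ) (f : Fin n → ℝ) :
    Svec n k f = ((Finset.univ.val : Multiset (Fin n)).map f).esymm k := by
  rw [Finset.esymm_map_val]; rfl

lemma svec_one (n : ℕ) (f : Fin n → ℝ) : Svec n 1 f = ∑ i, f i := by
  simp [Svec, Finset.powersetCard_one, Finset.sum_map]

lemma svec_top (n : ℕ) (f : Fin n → ℝ) : Svec n n f = ∏ i, f i := by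
  have h := Finset.powersetCard_self (Finset.univ : Finset (Fin n))
  simp only [Finset.card_univ, Fintype.card_fin] at h
  rw [Svec, h, Finset.sum_singleton]

lemma svec_compl (n m : ℕ) (hm : m ≤ n) (f : Fin n → ℝ) :
    Svec n (n - m) f = ∑ s ∈ Finset.powersetCard m (Finset.univ : Finset (Fin n)),
      ∏ i ∈ sᶜ, f i := by
  unfold Svec
  refine Finset.sum_nbij' (fun s => sᶜ) (fun s => sᶜ) ?_ ?_ ?_ ?_ ?_ <;>
    simp_all [Finset.mem_powersetCard_univ, Finset.card_compl]
  · omega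

lemma sq_sum_general {α : Type*} [DecidableEq α] (s : Finset α) (f : α → ℝ) :
    (∑ i ∈ s, f i) ^ 2 = (∑ i ∈ s, f i ^ 2)
      + 2 * ∑ t ∈ s.powersetCard 2, ∏ i ∈ t, f i := by
  induction s using Finset.induction_on with
  | empty =>
    rw [Finset.powersetCard_eq_empty.mpr (by simp)]
    simp
  | @insert a s h ih =>
    rw [Finset.sum_insert h, Finset.sum_insert h, add_sq,
      show (2:ℕ) = 1 + 1 from rfl, Finset.powersetCard_succ_insert h,
      Finset.sum_union, Finset.sum_image, ih]
    · simp only [Finset.powersetCard_one, Finset.sum_map, Function.Embedding.coeFn_mk]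
      have : ∀ x ∈ s, ∏ i ∈ insert a ({x} : Finset α), f i = f a * f x := by
        intro x hx
        rw [Finset.prod_insert (by simp; rintro rfl; exact h hx), Finset.prod_singleton]
      rw [Finset.sum_congr rfl this, ← Finset.mul_sum]
      ring
    · intro t ht u hu htu
      have hts : a ∉ t := fun hc => h ((Finset.mem_powersetCard.mp ht).1 hc)
      have hus : a ∉ u := fun hc => h ((Finset.mem_powersetCard.mp hu).1 hc)
      rw [← Finset.erase_insert hts, ← Finset.erase_insert hus, htu]
    · rw [Finset.disjoint_left]
      intro t ht htu
      obtain ⟨u, hu, rfl⟩ := Finset.mem_image.mp htu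
      exact h ((Finset.mem_powersetCard.mp ht).1 (Finset.mem_insert_self a u))


lemma choose_two_mul_two (n : ℕ) : n.choose 2 * 2 = n * (n - 1) := by
  induction n with
  | zero => rfl
  | succ n ih =>
    rw [Nat.choose_succ_succ n 1, Nat.add_mul, ih, Nat.choose_one_right]
    cases n <;> simp <;> ring_nf <;> omega

lemma newton_one (n : ℕ) (f : Fin n → ℝ) :
    Svec n 0 f * Svec n 2 f * ((n.choose 1 : ℕ) : ℝ) ^ 2
      ≤ Svec n 1 f ^ 2 * ((n.choose 0 : ℕ) : ℝ) * ((n.choose 2 : ℕ) : ℝ) := by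
  have hcs : (∑ i, f i) ^ 2 ≤ (n : ℝ) * ∑ i, f i ^ 2 := by
    have := sq_sum_le_card_mul_sum_sq (s := (Finset.univ : Finset (Fin n))) (f := f)
    simpa using this
  have hsq := sq_sum_general (Finset.univ : Finset (Fin n)) f
  have h2 : ((n.choose 2 : ℕ) : ℝ) * 2 = (n : ℝ) * ((n : ℝ) - 1) := by
    rcases Nat.eq_zero_or_pos n with h | h
    · subst h; simp
    · have := choose_two_mul_two n
      have : ((n.choose 2 * 2 : ℕ) : ℝ) = ((n * (n-1) : ℕ) : ℝ) := by rw [this]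
      push_cast [Nat.cast_sub h] at this
      simpa using this
  rw [svec_zero, svec_one]
  have hS2 : Svec n 2 f = ∑ t ∈ (Finset.univ : Finset (Fin n)).powersetCard 2, ∏ i ∈ t, f i :=
    rfl
  rw [Nat.choose_one_right, Nat.choose_zero_right]
  push_cast
  nlinarith [hcs, hsq, h2, sq_nonneg (∑ i, f i)]

lemma newton_base (n j : ℕ) (hj : 1 ≤ j) (hn : n = j + 1) (f : Fin n → ℝ) :
    Svec n (j-1) f * Svec n (j+1) f * ((n.choose j : ℕ) : ℝ) ^ 2
      ≤ Svec n j f ^ 2 * ((n.choose (j-1) : ℕ) : ℝ)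
        * ((n.choose (j+1) : ℕ) : ℝ) := by
  subst hn
  by_cases hz : ∃ i, f i = 0
  · obtain ⟨i, hi⟩ := hz
    have htop : Svec (j+1) (j+1) f = 0 := by
      rw [svec_top]
      exact Finset.prod_eq_zero (Finset.mem_univ i) hi
    rw [htop]
    have : Svec (j+1) (j-1) f * 0 * ((((j+1).choose j : ℕ)) : ℝ) ^ 2 = 0 := by ring
    rw [this]
    positivity
  · push_neg at hz
    set b : Fin (j+1) → ℝ := fun i => ∏ t ∈ Finset.univ.erase i, f t with hb
    have hP : ∀ i : Fin (j+1), f i * b i = ∏ x, f x := fun i =>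
      Finset.mul_prod_erase Finset.univ f (Finset.mem_univ i)
    have hSj : Svec (j+1) j f = ∑ i, b i := by
      have h1 : Svec (j+1) (j+1 - 1) f
          = ∑ s ∈ Finset.powersetCard 1 (Finset.univ : Finset (Fin (j+1))), ∏ i ∈ sᶜ, f i :=
        svec_compl (j+1) 1 (by omega) f
      have hj1 : j + 1 - 1 = j := by omega
      rw [hj1] at h1
      rw [h1, Finset.powersetCard_one, Finset.sum_map]
      apply Finset.sum_congr rfl
      intro i _
      have hcs : ({i} : Finset (Fin (j+1)))ᶜ = Finset.univ.erase i := by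
        ext x; simp [eq_comm, Finset.mem_erase, and_comm]
      simp only [Function.Embedding.coeFn_mk, hcs, hb]
    have hS2b : Svec (j+1) 2 b = Svec (j+1) (j+1) f * Svec (j+1) (j+1 - 2) f := by
      have hcompl := svec_compl (j+1) 2 (by omega) f
      have hthis : Svec (j+1) 2 b = ∑ t ∈ Finset.powersetCard 2 (Finset.univ : Finset (Fin (j+1))),
          ∏ i ∈ t, b i := rfl
      rw [hthis, hcompl, svec_top, Finset.mul_sum]
      apply Finset.sum_congr rfl
      intro t ht
      have htc : t.card = 2 := Finset.mem_powersetCard_univ.mp ht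
      have hft : ∏ i ∈ t, f i ≠ 0 := Finset.prod_ne_zero_iff.mpr fun i _ => hz i
      apply mul_left_cancel₀ hft
      have e1 : (∏ i ∈ t, f i) * (∏ i ∈ t, b i) = (∏ x, f x) ^ 2 := by
        rw [← Finset.prod_mul_distrib]
        rw [Finset.prod_congr rfl fun i _ => hP i, Finset.prod_const, htc, sq]
      rw [← mul_assoc, e1]
      have e2 : (∏ i ∈ t, f i) * ∏ i ∈ tᶜ, f i = ∏ x, f x :=
        Finset.prod_mul_prod_compl t f
      rw [sq, ← e2]
      ring
    have hN := newton_one (j+1) b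
    rw [svec_zero, svec_one, ← hSj, hS2b] at hN
    have hi1 : j + 1 - 2 = j - 1 := by omega
    rw [hi1] at hN
    have hc1 : ((j+1).choose 1 : ℕ) = j+1 := Nat.choose_one_right _
    have hc0 : ((j+1).choose 0 : ℕ) = 1 := Nat.choose_zero_right _
    have hcj : ((j+1).choose j : ℕ) = j+1 := Nat.choose_succ_self_right j
    have hcn : ((j+1).choose (j+1) : ℕ) = 1 := Nat.choose_self _
    have hcj1 : ((j+1).choose (j-1) : ℕ) = (j+1).choose 2 := by
      have h' : j - 1 = j + 1 - 2 := by omega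
      rw [h']
      exact Nat.choose_symm (by omega)
    rw [hc1, hc0] at hN
    rw [hcj, hcn, hcj1]
    push_cast at hN ⊢
    nlinarith [hN]

lemma exists_map_univ (n : ℕ) (t : Multiset ℝ) (h : Multiset.card t = n) :
    ∃ g : Fin n → ℝ, (Finset.univ.val : Multiset (Fin n)).map g = t := by
  have hl : (t.toList : Multiset ℝ) = t := t.coe_toList
  have hlen : t.toList.length = n := by rw [← h, ← hl]; simp
  subst hlen
  exact ⟨t.toList.get, by rw [Fin.univ_val_map, List.ofFn_get, hl]⟩

theorem newton_main : ∀ n : ℕ, ∀ j : ℕ, 1 ≤ j → j + 1 ≤ n → ∀ f : Fin n → ℝ,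
    Svec n (j-1) f * Svec n (j+1) f * ((n.choose j : ℕ) : ℝ) ^ 2
      ≤ Svec n j f ^ 2 * ((n.choose (j-1) : ℕ) : ℝ) * ((n.choose (j+1) : ℕ) : ℝ) := by
  intro n
  induction n using Nat.strong_induction_on with
  | _ n IH =>
  intro j hj hjn f
  rcases eq_or_lt_of_le hjn with heq | hlt
  · exact newton_base n j hj heq.symm f
  -- now j + 2 ≤ n
  have hn1 : 1 ≤ n := by omega
  set P : Polynomial ℝ := ∏ i : Fin n, (X + C (f i)) with hPdef
  have hPmon : ∀ i ∈ (Finset.univ : Finset (Fin n)), (X + C (f i)).Monic :=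
    fun i _ => monic_X_add_C (f i)
  have hPm : P.Monic := monic_prod_of_monic _ _ hPmon
  have hPdeg : P.natDegree = n := by
    rw [hPdef, natDegree_prod_of_monic _ _ hPmon]
    simp [natDegree_X_add_C]
  have hPcoeff : ∀ m : ℕ, m ≤ n → P.coeff m = Svec n (n - m) f := by
    intro m hm
    rw [hPdef, Finset.prod_X_add_C_coeff _ f (by simpa using hm)]
    simp only [Finset.card_univ, Fintype.card_fin]
    rfl
  have hProots : P.roots = (Finset.univ.val : Multiset (Fin n)).map (fun i => -f i) := by
    have h1 : P = (((Finset.univ.val : Multiset (Fin n)).map (fun i => -f i)).map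
        (fun a => X - C a)).prod := by
      rw [Multiset.map_map, hPdef, Finset.prod_eq_multiset_prod]
      congr 1
      apply Multiset.map_congr rfl
      intro i _
      simp [sub_neg_eq_add]
    rw [h1, roots_multiset_prod_X_sub_C]
  have hProotscard : Multiset.card P.roots = n := by rw [hProots]; simp
  set Q : Polynomial ℝ := derivative P with hQdef
  have hQcoeffn : Q.coeff (n-1) = (n : ℝ) := by
    rw [hQdef, coeff_derivative]
    have e : n - 1 + 1 = n := by omega
    rw [e]
    have hPn : P.coeff n = 1 := by rw [← hPdeg]; exact hPm.coeff_natDegree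
    rw [hPn]
    have : ((n-1 : ℕ) : ℝ) + 1 = (n : ℝ) := by
      push_cast [Nat.cast_sub hn1]; ring
    rw [one_mul, this]
  have hQne : Q ≠ 0 := by
    intro h
    rw [h, coeff_zero] at hQcoeffn
    have : (n : ℝ) ≠ 0 := Nat.cast_ne_zero.mpr (by omega)
    exact this hQcoeffn.symm
  have hQdegle : Q.natDegree ≤ n - 1 := by
    have h := natDegree_derivative_le P
    rw [hPdeg] at h
    exact h
  have hQrootsge : n - 1 ≤ Multiset.card Q.roots := by
    have h := P.card_roots_le_derivative
    rw [hProotscard, ← hQdef] at h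
    omega
  have hQrootsle : Multiset.card Q.roots ≤ Q.natDegree := card_roots' Q
  have hQrootscard : Multiset.card Q.roots = n - 1 :=
    le_antisymm (le_trans hQrootsle hQdegle) hQrootsge
  have hQdeg : Q.natDegree = n - 1 :=
    le_antisymm hQdegle (le_trans hQrootsge hQrootsle)
  have hQlead : Q.leadingCoeff = (n : ℝ) := by
    rw [Polynomial.leadingCoeff, hQdeg]; exact hQcoeffn
  have hQeq : C ((n : ℝ)) * (Q.roots.map fun a => X - C a).prod = Q := by
    rw [← hQlead]
    exact C_leadingCoeff_mul_prod_multiset_X_sub_C (by rw [hQrootscard, hQdeg])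
  set t : Multiset ℝ := Q.roots.map (fun a => -a) with htdef
  have htcard : Multiset.card t = n - 1 := by rw [htdef, Multiset.card_map, hQrootscard]
  have hQeq' : Q = C ((n : ℝ)) * (t.map fun a => X + C a).prod := by
    rw [← hQeq, htdef, Multiset.map_map]
    congr 2
    apply Multiset.map_congr rfl
    intro a _
    simp [sub_eq_add_neg]
  have hQcoeff2 : ∀ m, m ≤ n - 1 → Q.coeff m = (n : ℝ) * t.esymm (n - 1 - m) := by
    intro m hm
    rw [hQeq', coeff_C_mul, Multiset.prod_X_add_C_coeff t (htcard.symm ▸ hm), htcard]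
  have key : ∀ j', j' ≤ n - 1 →
      (n : ℝ) * t.esymm j' = ((n - j' : ℕ) : ℝ) * Svec n j' f := by
    intro j' hj'
    have h1 := hQcoeff2 (n - 1 - j') (by omega)
    have h2 : Q.coeff (n - 1 - j') = P.coeff (n - 1 - j' + 1) * ((n - 1 - j' : ℕ) + 1 : ℝ) := by
      rw [hQdef, coeff_derivative]
    have e1 : n - 1 - j' + 1 = n - j' := by omega
    have h3 : P.coeff (n - j') = Svec n j' f := by
      have h4 := hPcoeff (n - j') (by omega)
      rwa [show n - (n - j') = j' by omega] at h4
    rw [e1, h3] at h2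
    have e2 : n - 1 - (n - 1 - j') = j' := by omega
    rw [e2] at h1
    have e3 : ((n - 1 - j' : ℕ) : ℝ) + 1 = ((n - j' : ℕ) : ℝ) := by
      have : (n - 1 - j') + 1 = n - j' := by omega
      rw [← this]; push_cast; ring
    rw [h2, e3] at h1
    rw [← h1]; ring
  obtain ⟨g, hg⟩ := exists_map_univ (n-1) t htcard
  have hSg : ∀ j', Svec (n-1) j' g = t.esymm j' := fun j' => by
    rw [svec_eq_esymm, hg]
  have IH' := IH (n-1) (by omega) j hj (by omega) g
  -- abbreviations
  have hd1 : (0 : ℝ) < ((n - (j-1) : ℕ) : ℝ) := by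
    have : 0 < n - (j-1) := by omega
    exact_mod_cast this
  have hd2 : (0 : ℝ) < ((n - j : ℕ) : ℝ) := by
    have : 0 < n - j := by omega
    exact_mod_cast this
  have hd3 : (0 : ℝ) < ((n - (j+1) : ℕ) : ℝ) := by
    have : 0 < n - (j+1) := by omega
    exact_mod_cast this
  have k1 : (n : ℝ) * Svec (n-1) (j-1) g = ((n - (j-1) : ℕ) : ℝ) * Svec n (j-1) f := by
    rw [hSg]; exact key (j-1) (by omega)
  have k2 : (n : ℝ) * Svec (n-1) j g = ((n - j : ℕ) : ℝ) * Svec n j f := by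
    rw [hSg]; exact key j (by omega)
  have k3 : (n : ℝ) * Svec (n-1) (j+1) g = ((n - (j+1) : ℕ) : ℝ) * Svec n (j+1) f := by
    rw [hSg]; exact key (j+1) (by omega)
  have hch : ∀ j' : ℕ, (((n-1).choose j' : ℕ) : ℝ) * (n : ℝ)
      = ((n.choose j' : ℕ) : ℝ) * ((n - j' : ℕ) : ℝ) := by
    intro j'
    have h := Nat.choose_mul_succ_eq (n-1) j'
    rw [show n - 1 + 1 = n by omega] at h
    exact_mod_cast congrArg (Nat.cast : ℕ → ℝ) h
  have h1' : (n : ℝ) * (((n-1).choose (j-1) : ℕ) : ℝ)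
      = ((n.choose (j-1) : ℕ) : ℝ) * ((n - (j-1) : ℕ) : ℝ) := by rw [mul_comm]; exact hch (j-1)
  have h2' : (n : ℝ) * (((n-1).choose j : ℕ) : ℝ)
      = ((n.choose j : ℕ) : ℝ) * ((n - j : ℕ) : ℝ) := by rw [mul_comm]; exact hch j
  have h3' : (n : ℝ) * (((n-1).choose (j+1) : ℕ) : ℝ)
      = ((n.choose (j+1) : ℕ) : ℝ) * ((n - (j+1) : ℕ) : ℝ) := by rw [mul_comm]; exact hch (j+1)
  set D : ℝ := ((n - (j-1) : ℕ) : ℝ) * ((n - (j+1) : ℕ) : ℝ) * ((n - j : ℕ) : ℝ)^2 with hD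
  have hDpos : 0 < D := by rw [hD]; positivity
  have E : Svec (n-1) (j-1) g * Svec (n-1) (j+1) g * (((n-1).choose j : ℕ) : ℝ)^2 * (n:ℝ)^4
      = Svec n (j-1) f * Svec n (j+1) f * ((n.choose j : ℕ) : ℝ)^2 * D := by
    have e : Svec (n-1) (j-1) g * Svec (n-1) (j+1) g * (((n-1).choose j : ℕ) : ℝ)^2 * (n:ℝ)^4
        = ((n:ℝ) * Svec (n-1) (j-1) g) * ((n:ℝ) * Svec (n-1) (j+1) g)
          * ((n:ℝ) * (((n-1).choose j : ℕ) : ℝ))^2 := by ring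
    rw [e, k1, k3, h2', hD]
    ring
  have E2 : Svec (n-1) j g ^ 2 * (((n-1).choose (j-1) : ℕ) : ℝ)
        * (((n-1).choose (j+1) : ℕ) : ℝ) * (n:ℝ)^4
      = Svec n j f ^ 2 * ((n.choose (j-1) : ℕ) : ℝ) * ((n.choose (j+1) : ℕ) : ℝ) * D := by
    have e : Svec (n-1) j g ^ 2 * (((n-1).choose (j-1) : ℕ) : ℝ)
          * (((n-1).choose (j+1) : ℕ) : ℝ) * (n:ℝ)^4
        = ((n:ℝ) * Svec (n-1) j g)^2 * ((n:ℝ) * (((n-1).choose (j-1) : ℕ) : ℝ))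
          * ((n:ℝ) * (((n-1).choose (j+1) : ℕ) : ℝ)) := by ring
    rw [e, k2, h1', h3', hD]
    ring
  have final : Svec n (j-1) f * Svec n (j+1) f * ((n.choose j : ℕ) : ℝ)^2 * D
      ≤ Svec n j f ^ 2 * ((n.choose (j-1) : ℕ) : ℝ) * ((n.choose (j+1) : ℕ) : ℝ) * D := by
    rw [← E, ← E2]
    exact mul_le_mul_of_nonneg_right IH' (by positivity)
  exact le_of_mul_le_mul_right final hDpos

/-- Generalized Maclaurin inequality: for `λ ∈ Γ_k` and `k > l ≥ 0`, `r > s ≥ 0`,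
`k ≥ r`, `l ≥ s`, `k ≤ n`,
`((S_k/C_n^k)/(S_l/C_n^l))^{1/(k−l)} ≤ ((S_r/C_n^r)/(S_s/C_n^s))^{1/(r−s)}`. -/
theorem generalized_maclaurin
    (n k l r s : ℕ) (hn : 2 ≤ n) (hlk : l < k) (hsr : s < r)
    (hrk : r ≤ k) (hsl : s ≤ l) (hkn : k ≤ n)
    (lam : Fin n → ℝ) (hlam : lam ∈ GardingCone n k) :
    ((Svec n k lam / (n.choose k : ℝ)) / (Svec n l lam / (n.choose l : ℝ)))
        ^ ((1 : ℝ) / ((k : ℝ) - l))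
      ≤ ((Svec n r lam / (n.choose r : ℝ)) / (Svec n s lam / (n.choose s : ℝ)))
        ^ ((1 : ℝ) / ((r : ℝ) - s)) := by
  have hSpos : ∀ i : ℕ, i ≤ k → 0 < Svec n i lam := by
    intro i hik
    rcases Nat.eq_zero_or_pos i with h | h
    · subst h; rw [svec_zero]; norm_num
    · exact hlam i h hik
  have hcpos : ∀ i : ℕ, i ≤ n → (0 : ℝ) < ((n.choose i : ℕ) : ℝ) := by
    intro i hin
    exact_mod_cast Nat.choose_pos hin
  set p : ℕ → ℝ := fun i => Svec n i lam / ((n.choose i : ℕ) : ℝ) with hp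
  have hppos : ∀ i : ℕ, i ≤ k → 0 < p i := fun i hik =>
    div_pos (hSpos i hik) (hcpos i (le_trans hik hkn))
  have hnewton : ∀ i : ℕ, 1 ≤ i → i + 1 ≤ n → p (i-1) * p (i+1) ≤ p i ^ 2 := by
    intro i h1 h2
    have hN := newton_main n i h1 h2 lam
    rw [hp]
    simp only
    rw [div_mul_div_comm, div_pow, div_le_div_iff₀
      (mul_pos (hcpos (i-1) (by omega)) (hcpos (i+1) (by omega)))
      (pow_pos (hcpos i (by omega)) 2)]
    nlinarith [hN]
  set q : ℕ → ℝ := fun i => Real.log (p (i+1)) - Real.log (p i) with hq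
  have hqstep : ∀ i : ℕ, i + 2 ≤ k → q (i+1) ≤ q i := by
    intro i h2
    have hN := hnewton (i+1) (by omega) (by omega)
    rw [show i + 1 - 1 = i by omega] at hN
    have h0 : 0 < p i := hppos i (by omega)
    have h1 : 0 < p (i+1) := hppos (i+1) (by omega)
    have h2' : 0 < p (i+2) := hppos (i+2) (by omega)
    have hlog : Real.log (p i * p (i+2)) ≤ Real.log (p (i+1) ^ 2) :=
      Real.log_le_log (by positivity) (by rw [show i + 1 + 1 = i + 2 by omega] at hN; exact hN)
    rw [Real.log_mul h0.ne' h2'.ne', Real.log_pow] at hlog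
    simp only [hq, show i + 1 + 1 = i + 2 by omega]
    push_cast at hlog
    linarith
  have hqmono : ∀ i j' : ℕ, i ≤ j' → j' + 1 ≤ k → q j' ≤ q i := by
    intro i j' hij
    induction j', hij using Nat.le_induction with
    | base => intro _; exact le_refl _
    | succ m hm ih =>
      intro h
      exact le_trans (hqstep m (by omega)) (ih (by omega))
  -- partial sums of q over Ico
  have hG : ∀ a b : ℕ, a ≤ b →
      Real.log (p b) - Real.log (p a) = ∑ i ∈ Finset.Ico a b, q i := by
    intro a b hab
    induction b, hab using Nat.le_induction with
    | base => simp
    | succ m hm ih =>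
      rw [Finset.sum_Ico_succ_top hm, ← ih]
      simp only [hq]
      ring
  have L1 : ∀ a m b : ℕ, a ≤ m → m ≤ b → b ≤ k →
      ((m - a : ℕ) : ℝ) * ∑ i ∈ Finset.Ico m b, q i
        ≤ ((b - m : ℕ) : ℝ) * ∑ i ∈ Finset.Ico a m, q i := by
    intro a m b ham hmb hbk
    have hterm : ∀ jj ∈ Finset.Ico a m, ∑ i ∈ Finset.Ico m b, q i ≤ ((b - m : ℕ) : ℝ) * q jj := by
      intro jj hjj
      rw [Finset.mem_Ico] at hjj
      calc ∑ i ∈ Finset.Ico m b, q i ≤ ∑ i ∈ Finset.Ico m b, q jj := by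
            apply Finset.sum_le_sum
            intro i hi
            rw [Finset.mem_Ico] at hi
            exact hqmono jj i (by omega) (by omega)
        _ = ((b - m : ℕ) : ℝ) * q jj := by
            rw [Finset.sum_const, Nat.card_Ico, nsmul_eq_mul]
    calc ((m - a : ℕ) : ℝ) * ∑ i ∈ Finset.Ico m b, q i
        = ∑ _jj ∈ Finset.Ico a m, ∑ i ∈ Finset.Ico m b, q i := by
          rw [Finset.sum_const, Nat.card_Ico, nsmul_eq_mul]
      _ ≤ ∑ jj ∈ Finset.Ico a m, ((b - m : ℕ) : ℝ) * q jj := Finset.sum_le_sum hterm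
      _ = ((b - m : ℕ) : ℝ) * ∑ i ∈ Finset.Ico a m, q i := by rw [Finset.mul_sum]
  set G : ℕ → ℕ → ℝ := fun a b => ∑ i ∈ Finset.Ico a b, q i with hGdef
  have hsplit : ∀ a m b : ℕ, a ≤ m → m ≤ b → G a m + G m b = G a b := by
    intro a m b h1 h2
    exact Finset.sum_Ico_consecutive _ h1 h2
  have step1 : ((k - s : ℕ) : ℝ) * G l k ≤ ((k - l : ℕ) : ℝ) * G s k := by
    have hA := L1 s l k hsl (le_of_lt hlk) (le_refl k)
    have hsp := hsplit s l k hsl (le_of_lt hlk)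
    have hcast : ((k - s : ℕ) : ℝ) = ((k - l : ℕ) : ℝ) + ((l - s : ℕ) : ℝ) := by
      have : (k - s : ℕ) = (k - l : ℕ) + (l - s : ℕ) := by omega
      exact_mod_cast congrArg (Nat.cast : ℕ → ℝ) this
    rw [hcast, ← hsp]
    have : G l k = ∑ i ∈ Finset.Ico l k, q i := rfl
    nlinarith [hA]
  have step2 : ((r - s : ℕ) : ℝ) * G s k ≤ ((k - s : ℕ) : ℝ) * G s r := by
    have hB := L1 s r k (le_of_lt hsr) hrk (le_refl k)
    have hsp := hsplit s r k (le_of_lt hsr) hrk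
    have hcast : ((k - s : ℕ) : ℝ) = ((k - r : ℕ) : ℝ) + ((r - s : ℕ) : ℝ) := by
      have : (k - s : ℕ) = (k - r : ℕ) + (r - s : ℕ) := by omega
      exact_mod_cast congrArg (Nat.cast : ℕ → ℝ) this
    rw [hcast, ← hsp]
    nlinarith [hB]
  have hks : (0 : ℝ) < ((k - s : ℕ) : ℝ) := by
    have : 0 < k - s := by omega
    exact_mod_cast this
  have hrs : (0 : ℝ) < ((r - s : ℕ) : ℝ) := by
    have : 0 < r - s := by omega
    exact_mod_cast this
  have hkl : (0 : ℝ) < ((k - l : ℕ) : ℝ) := by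
    have : 0 < k - l := by omega
    exact_mod_cast this
  have chord : ((r - s : ℕ) : ℝ) * G l k ≤ ((k - l : ℕ) : ℝ) * G s r := by
    have c1 : ((r - s : ℕ) : ℝ) * (((k - s : ℕ) : ℝ) * G l k)
        ≤ ((r - s : ℕ) : ℝ) * (((k - l : ℕ) : ℝ) * G s k) :=
      mul_le_mul_of_nonneg_left step1 hrs.le
    have c2 : ((k - l : ℕ) : ℝ) * (((r - s : ℕ) : ℝ) * G s k)
        ≤ ((k - l : ℕ) : ℝ) * (((k - s : ℕ) : ℝ) * G s r) :=
      mul_le_mul_of_nonneg_left step2 hkl.le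
    have := le_trans (by linarith [c1] : ((k - s : ℕ) : ℝ) * (((r - s : ℕ) : ℝ) * G l k)
      ≤ ((k - l : ℕ) : ℝ) * (((r - s : ℕ) : ℝ) * G s k)) c2
    have h := (mul_le_mul_iff_right₀ hks).mp (by linarith [this, c2] :
      ((k - s : ℕ) : ℝ) * (((r - s : ℕ) : ℝ) * G l k)
        ≤ ((k - s : ℕ) : ℝ) * (((k - l : ℕ) : ℝ) * G s r))
    linarith [h]
  -- final rpow manipulation
  have hplk : 0 < p k / p l := div_pos (hppos k (le_refl k)) (hppos l (by omega))
  have hprs : 0 < p r / p s := div_pos (hppos r hrk) (hppos s (by omega))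
  have hlogx : Real.log (p k / p l) = G l k := by
    rw [Real.log_div (hppos k (le_refl k)).ne' (hppos l (by omega)).ne']
    exact hG l k (le_of_lt hlk)
  have hlogy : Real.log (p r / p s) = G s r := by
    rw [Real.log_div (hppos r hrk).ne' (hppos s (by omega)).ne']
    exact hG s r (le_of_lt hsr)
  have hcastkl : ((k - l : ℕ) : ℝ) = (k : ℝ) - (l : ℝ) := by
    exact_mod_cast Nat.cast_sub (le_of_lt hlk)
  have hcastrs : ((r - s : ℕ) : ℝ) = (r : ℝ) - (s : ℝ) := by
    exact_mod_cast Nat.cast_sub (le_of_lt hsr)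
  have hgoal : (p k / p l) ^ ((1 : ℝ) / ((k : ℝ) - l)) ≤ (p r / p s) ^ ((1 : ℝ) / ((r : ℝ) - s)) := by
    rw [Real.rpow_def_of_pos hplk, Real.rpow_def_of_pos hprs, Real.exp_le_exp]
    rw [hlogx, hlogy]
    rw [mul_one_div, mul_one_div, div_le_div_iff₀
      (by rw [← hcastkl]; exact hkl) (by rw [← hcastrs]; exact hrs)]
    rw [← hcastkl, ← hcastrs]
    linarith [chord]
  exact hgoal
end
end

section
/- Let n ≥ 1 and let k be an integer with 1 ≤ k ≤ n. For every n×n real matrix A = (a_{ij}) and all indices 1 ≤ i, j ≤ n, one has Σ_{l=1}^{n} S_k^{il}(A) a_{jl} = Σ_{l=1}^{n} S_k^{lj}(A) a_{li}. -/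
open scoped BigOperators

noncomputable section

/-- Sum of the k×k principal minors of A (= k-th elementary symmetric function of the
eigenvalues of A); by definition `Smat n 0 A = 1`. -/
def Smat (n k : ℕ) (A : Matrix (Fin n) (Fin n) ℝ) : ℝ :=
  ∑ s ∈ Finset.powersetCard k (Finset.univ : Finset (Fin n)),
    (A.submatrix (fun i : {a // a ∈ s} => (i : Fin n)) (fun j : {a // a ∈ s} => (j : Fin n))).det

/-- `S_k^{ij}(A) = ∂ S_k(A) / ∂ a_{ij}`, the partial derivative of the polynomial map
`A ↦ S_k(A)` with respect to the `(i,j)` entry.  Note `Sij n 0 A i j = 0`, matching the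
convention `S_0^{il}(A) := 0`. -/
def Sij (n k : ℕ) (A : Matrix (Fin n) (Fin n) ℝ) (i j : Fin n) : ℝ :=
  deriv (fun t : ℝ => Smat n k (A + t • Matrix.single i j (1:ℝ))) 0

namespace SijAux

open Matrix


variable {n : ℕ}

abbrev incl (s : Finset (Fin n)) : {a // a ∈ s} → Fin n := fun a => (a : Fin n)

lemma std_apply (i j x y : Fin n) :
    Matrix.single i j (1:ℝ) x y = if x = i ∧ y = j then 1 else 0 := by
  simp only [Matrix.single, Matrix.of_apply, eq_comm]

lemma det_updateRow_lincomb {m : Type*} [DecidableEq m] [Fintype m]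
    (M : Matrix m m ℝ) (r : m) {ι : Type*} (t : Finset ι) (w : ι → ℝ) (v : ι → m → ℝ) :
    (M.updateRow r (∑ l ∈ t, w l • v l)).det = ∑ l ∈ t, w l * (M.updateRow r (v l)).det := by
  classical
  induction t using Finset.induction_on with
  | empty =>
      rw [Finset.sum_empty, Finset.sum_empty,
        show (0 : m → ℝ) = (0:ℝ) • M r by simp, Matrix.det_updateRow_smul,
        Matrix.updateRow_eq_self]
      ring
  | @insert a t ha ih =>
      rw [Finset.sum_insert ha, Matrix.det_updateRow_add, Matrix.det_updateRow_smul, ih,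
        Finset.sum_insert ha]

lemma det_sub_perturb (A : Matrix (Fin n) (Fin n) ℝ) (i j : Fin n) (t : ℝ)
    (s : Finset (Fin n)) :
    ((A + t • Matrix.single i j (1:ℝ)).submatrix (incl s) (incl s)).det
      = (A.submatrix (incl s) (incl s)).det
        + t * (if h : i ∈ s then
            ((A.submatrix (incl s) (incl s)).updateRow ⟨i, h⟩
              (fun c => if (c : Fin n) = j then (1:ℝ) else 0)).det
          else 0) := by
  classical
  by_cases hi : i ∈ s
  · rw [dif_pos hi]
    have key : (A + t • Matrix.single i j (1:ℝ)).submatrix (incl s) (incl s)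
        = (A.submatrix (incl s) (incl s)).updateRow ⟨i, hi⟩
            ((fun c : {a // a ∈ s} => A i (c : Fin n))
              + t • fun c : {a // a ∈ s} => if (c : Fin n) = j then (1:ℝ) else 0) := by
      ext r c
      by_cases hr : r = ⟨i, hi⟩
      · subst hr
        simp only [Matrix.submatrix_apply, Matrix.add_apply, Matrix.smul_apply,
          Matrix.updateRow_self, Pi.add_apply, Pi.smul_apply, smul_eq_mul, std_apply,
          incl]
        simp
      · have hr' : (r : Fin n) ≠ i := fun h => hr (Subtype.ext h)
        simp only [Matrix.submatrix_apply, Matrix.add_apply, Matrix.smul_apply,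
          Matrix.updateRow_ne hr, std_apply, incl]
        simp [hr']
    rw [key, Matrix.det_updateRow_add, Matrix.det_updateRow_smul]
    congr 2
    exact Matrix.updateRow_eq_self _ _
  · rw [dif_neg hi]
    have key : (A + t • Matrix.single i j (1:ℝ)).submatrix (incl s) (incl s)
        = A.submatrix (incl s) (incl s) := by
      ext r c
      have hr' : (r : Fin n) ≠ i := fun h => hi (h ▸ r.2)
      simp only [Matrix.submatrix_apply, Matrix.add_apply, Matrix.smul_apply, std_apply, incl]
      simp [hr']
    rw [key, mul_zero, add_zero]


lemma Sij_eq (k : ℕ) (A : Matrix (Fin n) (Fin n) ℝ) (i j : Fin n) :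
    Sij n k A i j
      = ∑ s ∈ Finset.powersetCard k (Finset.univ : Finset (Fin n)),
          (if h : i ∈ s then
            ((A.submatrix (incl s) (incl s)).updateRow ⟨i, h⟩
              (fun c => if (c : Fin n) = j then (1:ℝ) else 0)).det
          else 0) := by
  classical
  set C : ℝ := ∑ s ∈ Finset.powersetCard k (Finset.univ : Finset (Fin n)),
      (if h : i ∈ s then
        ((A.submatrix (incl s) (incl s)).updateRow ⟨i, h⟩
          (fun c => if (c : Fin n) = j then (1:ℝ) else 0)).det
      else 0) with hC
  have key : ∀ t : ℝ, Smat n k (A + t • Matrix.single i j (1:ℝ))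
      = Smat n k A + t * C := by
    intro t
    unfold Smat
    rw [hC, Finset.mul_sum, ← Finset.sum_add_distrib]
    exact Finset.sum_congr rfl fun s _ => det_sub_perturb A i j t s
  have heq : (fun t : ℝ => Smat n k (A + t • Matrix.single i j (1:ℝ)))
      = fun t : ℝ => Smat n k A + t * C := funext key
  rw [Sij, heq]
  have h := (((hasDerivAt_id (0:ℝ)).mul_const C).const_add (Smat n k A)).deriv
  simpa using h

lemma Smat_transpose (k : ℕ) (A : Matrix (Fin n) (Fin n) ℝ) :
    Smat n k Aᵀ = Smat n k A := by
  unfold Smat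
  refine Finset.sum_congr rfl fun s _ => ?_
  rw [show (Aᵀ).submatrix (incl s) (incl s) = (A.submatrix (incl s) (incl s))ᵀ from rfl,
    Matrix.det_transpose]

lemma Sij_transpose (k : ℕ) (A : Matrix (Fin n) (Fin n) ℝ) (i j : Fin n) :
    Sij n k Aᵀ i j = Sij n k A j i := by
  unfold Sij
  congr 1
  funext t
  rw [← Smat_transpose k (A + t • Matrix.single j i (1:ℝ))]
  congr 1
  ext x y
  simp only [Matrix.transpose_apply, Matrix.add_apply, Matrix.smul_apply, smul_eq_mul,
    std_apply]
  by_cases h1 : x = i <;> by_cases h2 : y = j <;> simp [h1, h2]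

lemma F_eq (k : ℕ) (A : Matrix (Fin n) (Fin n) ℝ) (i j : Fin n) :
    ∑ l : Fin n, Sij n k A i l * A j l
      = ∑ s ∈ Finset.powersetCard k (Finset.univ : Finset (Fin n)),
          (if i ∈ s then ((A.updateRow i (A j)).submatrix (incl s) (incl s)).det else 0) := by
  classical
  simp_rw [Sij_eq, Finset.sum_mul]
  rw [Finset.sum_comm]
  refine Finset.sum_congr rfl fun s _ => ?_
  by_cases h : i ∈ s
  · rw [if_pos h]
    simp only [dif_pos h]
    have expand : ((A.updateRow i (A j)).submatrix (incl s) (incl s))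
        = (A.submatrix (incl s) (incl s)).updateRow ⟨i, h⟩
            (∑ l : Fin n, A j l • fun c : {a // a ∈ s} =>
              if (c : Fin n) = l then (1:ℝ) else 0) := by
      ext r c
      by_cases hr : r = ⟨i, h⟩
      · subst hr
        have : incl s ⟨i, h⟩ = i := rfl
        simp only [Matrix.submatrix_apply, this, Matrix.updateRow_self, Finset.sum_apply,
          Pi.smul_apply, smul_eq_mul, mul_ite, mul_one, mul_zero]
        rw [Finset.sum_ite_eq (Finset.univ : Finset (Fin n)) ((c : Fin n)) (A j)]
        simp
      · have hr' : (r : Fin n) ≠ i := fun hh => hr (Subtype.ext hh)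
        simp [Matrix.updateRow_ne hr, Matrix.updateRow_ne hr']
    rw [expand, det_updateRow_lincomb]
    exact Finset.sum_congr rfl fun l _ => mul_comm _ _
  · simp [h]


lemma Gsym (k : ℕ) (A : Matrix (Fin n) (Fin n) ℝ) (i j : Fin n) :
    ∑ s ∈ Finset.powersetCard k (Finset.univ : Finset (Fin n)),
        (if i ∈ s then ((A.updateRow i (A j)).submatrix (incl s) (incl s)).det else 0)
      = ∑ s ∈ Finset.powersetCard k (Finset.univ : Finset (Fin n)),
        (if j ∈ s then ((Aᵀ.updateRow j (Aᵀ i)).submatrix (incl s) (incl s)).det else 0) := by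
  classical
  by_cases hij : i = j
  · subst hij
    refine Finset.sum_congr rfl fun s _ => ?_
    by_cases h : i ∈ s
    · rw [if_pos h, if_pos h, Matrix.updateRow_eq_self, Matrix.updateRow_eq_self,
        show (Aᵀ).submatrix (incl s) (incl s) = (A.submatrix (incl s) (incl s))ᵀ from rfl,
        Matrix.det_transpose]
    · simp [h]
  · set B := A.updateRow i (A j) with hB
    set D := Aᵀ.updateRow j (Aᵀ i) with hD
    set C := A.updateCol j (fun y => A y i) with hCdef
    have hC : D = Cᵀ := by
      ext x y
      by_cases hx : x = j
      · subst hx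
        simp [hD, hCdef, Matrix.updateRow_self, Matrix.updateCol_self]
      · simp [hD, hCdef, Matrix.updateRow_ne hx, Matrix.updateCol_ne hx]
    have lhs_eq : ∀ s ∈ Finset.powersetCard k (Finset.univ : Finset (Fin n)),
        (if i ∈ s then (B.submatrix (incl s) (incl s)).det else 0)
        = (if i ∈ s ∧ j ∉ s then (B.submatrix (incl s) (incl s)).det else 0) := by
      intro s _
      by_cases hi : i ∈ s
      · by_cases hj : j ∈ s
        · rw [if_pos hi, if_neg (fun h => h.2 hj)]
          apply Matrix.det_zero_of_row_eq
            (show (⟨i, hi⟩ : {a // a ∈ s}) ≠ ⟨j, hj⟩ from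
              fun h => hij (congrArg Subtype.val h))
          funext c
          show B i (c : Fin n) = B j (c : Fin n)
          simp [hB, Matrix.updateRow_self, Matrix.updateRow_ne (Ne.symm hij)]
        · rw [if_pos hi, if_pos ⟨hi, hj⟩]
      · rw [if_neg hi, if_neg (fun h => hi h.1)]
    have rhs_eq : ∀ s ∈ Finset.powersetCard k (Finset.univ : Finset (Fin n)),
        (if j ∈ s then (D.submatrix (incl s) (incl s)).det else 0)
        = (if j ∈ s ∧ i ∉ s then (D.submatrix (incl s) (incl s)).det else 0) := by
      intro s _
      by_cases hj : j ∈ s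
      · by_cases hi : i ∈ s
        · rw [if_pos hj, if_neg (fun h => h.2 hi)]
          apply Matrix.det_zero_of_row_eq
            (show (⟨j, hj⟩ : {a // a ∈ s}) ≠ ⟨i, hi⟩ from
              fun h => hij (congrArg Subtype.val h).symm)
          funext c
          show D j (c : Fin n) = D i (c : Fin n)
          simp [hD, Matrix.updateRow_self, Matrix.updateRow_ne hij]
        · rw [if_pos hj, if_pos ⟨hj, hi⟩]
      · rw [if_neg hj, if_neg (fun h => hj h.1)]
    rw [Finset.sum_congr rfl lhs_eq, Finset.sum_congr rfl rhs_eq,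
      ← Finset.sum_filter, ← Finset.sum_filter]
    have swap_invol : ∀ s : Finset (Fin n),
        (s.image (Equiv.swap i j)).image (Equiv.swap i j) = s := by
      intro s
      rw [Finset.image_image,
        show (⇑(Equiv.swap i j) ∘ ⇑(Equiv.swap i j)) = id from
          funext fun x => Equiv.swap_apply_self i j x,
        Finset.image_id]
    have mem_to : ∀ (a b : Fin n) (s : Finset (Fin n)),
        s ∈ (Finset.powersetCard k (Finset.univ : Finset (Fin n))).filter
            (fun s => a ∈ s ∧ b ∉ s) →
        s.image (Equiv.swap a b) ∈ (Finset.powersetCard k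
            (Finset.univ : Finset (Fin n))).filter (fun s => b ∈ s ∧ a ∉ s) := by
      intro a b s hs
      rw [Finset.mem_filter, Finset.mem_powersetCard] at hs ⊢
      obtain ⟨⟨_, hcard⟩, ha, hb⟩ := hs
      refine ⟨⟨Finset.subset_univ _, by
        rw [Finset.card_image_of_injective _ (Equiv.injective _)]; exact hcard⟩, ?_, ?_⟩
      · exact Finset.mem_image.mpr ⟨a, ha, Equiv.swap_apply_left a b⟩
      · intro h
        obtain ⟨x, hxs, hxe⟩ := Finset.mem_image.mp h
        have hxb : x = b := by
          have h2 := congrArg (Equiv.swap a b) hxe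
          rwa [Equiv.swap_apply_self, Equiv.swap_apply_left] at h2
        exact hb (hxb ▸ hxs)
    refine Finset.sum_nbij' (fun s => s.image (Equiv.swap i j))
      (fun s => s.image (Equiv.swap i j))
      (fun s hs => mem_to i j s hs)
      (fun s hs => by
        have h2 := mem_to j i s hs
        rwa [Equiv.swap_comm j i] at h2)
      (fun s _ => swap_invol s) (fun s _ => swap_invol s)
      (fun s hs => ?_)
    -- termwise equality
    rw [Finset.mem_filter, Finset.mem_powersetCard] at hs
    obtain ⟨-, hi, hj⟩ := hs
    set s' := s.image (Equiv.swap i j) with hs'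
    have hmem : ∀ a : Fin n, a ∈ s ↔ Equiv.swap i j a ∈ s' :=
      fun a => ((Equiv.injective (Equiv.swap i j)).mem_finset_image).symm
    set e : {a // a ∈ s} ≃ {a // a ∈ s'} :=
      (Equiv.swap i j).subtypeEquiv hmem with he
    have hdetD : (D.submatrix (incl s') (incl s')).det
        = (C.submatrix (incl s') (incl s')).det := by
      rw [hC, show (Cᵀ).submatrix (incl s') (incl s')
          = ((C.submatrix (incl s') (incl s')))ᵀ from rfl, Matrix.det_transpose]
    have hsub : B.submatrix (incl s) (incl s)
        = ((C.submatrix (incl s') (incl s'))).submatrix e e := by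
      ext r c
      show B (r : Fin n) (c : Fin n) = C (Equiv.swap i j (r : Fin n)) (Equiv.swap i j (c : Fin n))
      have hrj : (r : Fin n) ≠ j := fun h => hj (h ▸ r.2)
      have hcj : (c : Fin n) ≠ j := fun h => hj (h ▸ c.2)
      by_cases hr : (r : Fin n) = i
      · rw [hr, Equiv.swap_apply_left]
        by_cases hc : (c : Fin n) = i
        · rw [hc, Equiv.swap_apply_left]
          simp [hB, hCdef, Matrix.updateRow_self, Matrix.updateCol_self]
        · rw [Equiv.swap_apply_of_ne_of_ne hc hcj]
          simp [hB, hCdef, Matrix.updateRow_self, Matrix.updateCol_ne hcj]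
      · rw [Equiv.swap_apply_of_ne_of_ne hr hrj]
        by_cases hc : (c : Fin n) = i
        · rw [hc, Equiv.swap_apply_left]
          simp [hB, hCdef, Matrix.updateRow_ne hr, Matrix.updateCol_self]
        · rw [Equiv.swap_apply_of_ne_of_ne hc hcj]
          simp [hB, hCdef, Matrix.updateRow_ne hr, Matrix.updateCol_ne hcj]
    rw [hsub, Matrix.det_submatrix_equiv_self, hdetD]


lemma main (k : ℕ) (A : Matrix (Fin n) (Fin n) ℝ) (i j : Fin n) :
    ∑ l : Fin n, Sij n k A i l * A j l = ∑ l : Fin n, Sij n k A l j * A l i := by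
  classical
  have rhs : ∑ l : Fin n, Sij n k A l j * A l i
      = ∑ l : Fin n, Sij n k Aᵀ j l * Aᵀ i l := by
    refine Finset.sum_congr rfl fun l _ => ?_
    rw [Sij_transpose, Matrix.transpose_apply]
  rw [rhs, F_eq k A i j, F_eq k Aᵀ j i]
  exact Gsym k A i j

end SijAux

/-- `Σ_l S_k^{il}(A) a_{jl} = Σ_l S_k^{lj}(A) a_{li}`. -/
theorem Sij_commutation
    (n k : ℕ) (hn : 1 ≤ n) (hk1 : 1 ≤ k) (hkn : k ≤ n)
    (A : Matrix (Fin n) (Fin n) ℝ) (i j : Fin n) :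
    ∑ l : Fin n, Sij n k A i l * A j l = ∑ l : Fin n, Sij n k A l j * A l i :=
  SijAux.main k A i j
end
end
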